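/- (Closedness of the dual form on a kite) Let a, b, c, d ∈ Quaternion ℝ be nonzero purely imaginary quaternions with a + b + c + d = 0 (the oriented edges of a closed quadrilateral) whose quaternionic cross-ratio equals −1, i.e. a * b⁻¹ * c * d⁻¹ = −1 (the quadrilateral is a conformal square). Then the dual edges with alternating signs close up: a/‖a‖² − b/‖b‖² + c/‖c‖² − d/‖d‖² = 0; equivalently a⁻¹ + c⁻¹ = b⁻¹ + d⁻¹. -/

import Mathlib

lemma pure_smul_inv_aux (x : Quaternion ℝ) (hx : x.re = 0) :
    (‖x‖ ^ 2)⁻¹ • x = -x⁻¹ := by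
  have hsx : star x = -x := Quaternion.star_eq_neg.2 hx
  have hn : (‖x‖ ^ 2) = Quaternion.normSq x := by
    rw [sq, ← Quaternion.normSq_eq_norm_mul_self]
  rw [hn, Quaternion.inv_def, hsx, smul_neg, neg_neg]

/-- Closedness of the dual discrete one-form on a conformal square: if the
oriented edges `a, b, c, d` of a closed quadrilateral are nonzero purely
imaginary quaternions whose cross-ratio `a * b⁻¹ * c * d⁻¹` equals `−1`, then
the dual edges with alternating signs close up. -/
theorem dual_form_closed_on_conformal_square
    (a b c d : Quaternion ℝ)
    (ha : a.re = 0) (hb : b.re = 0) (hc : c.re = 0) (hd : d.re = 0)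
    (ha0 : a ≠ 0) (hb0 : b ≠ 0) (hc0 : c ≠ 0) (hd0 : d ≠ 0)
    (hclosed : a + b + c + d = 0)
    (hcr : a * b⁻¹ * c * d⁻¹ = -1) :
    (‖a‖ ^ 2)⁻¹ • a - (‖b‖ ^ 2)⁻¹ • b + (‖c‖ ^ 2)⁻¹ • c - (‖d‖ ^ 2)⁻¹ • d = 0 ∧
      a⁻¹ + c⁻¹ = b⁻¹ + d⁻¹ := by
  have hsa : star a = -a := Quaternion.star_eq_neg.2 ha
  have hsb : star b = -b := Quaternion.star_eq_neg.2 hb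
  have hsc : star c = -c := Quaternion.star_eq_neg.2 hc
  -- from the cross-ratio: a * b⁻¹ * c = -d
  have h1 : a * b⁻¹ * c = -d := by
    have := congrArg (· * d) hcr
    simpa [mul_assoc, inv_mul_cancel₀ hd0] using this
  -- from closedness: a * b⁻¹ * c = a + b + c
  have h2 : a * b⁻¹ * c = a + b + c := by
    rw [h1]; exact (eq_neg_of_add_eq_zero_left hclosed).symm
  -- conjugation gives c * b⁻¹ * a = a + b + c
  have h3 : c * b⁻¹ * a = a + b + c := by
    have hst := congrArg star h2
    rw [star_mul, star_mul, star_inv₀, hsa, hsb, hsc, star_add, star_add,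
      hsa, hsb, hsc, inv_neg] at hst
    have h4 : c * b⁻¹ * a = -(-a + -b + -c) := by
      rw [← hst]; noncomm_ring
    rw [h4]; abel
  have hd_eq : d = -(c * b⁻¹ * a) := by
    rw [h3]; exact (neg_eq_of_add_eq_zero_right hclosed).symm
  have hd_inv : d⁻¹ = -(a⁻¹ * b * c⁻¹) := by
    rw [hd_eq, inv_neg, mul_inv_rev, mul_inv_rev, inv_inv, mul_assoc]
  have key : a⁻¹ + c⁻¹ = b⁻¹ + d⁻¹ := by
    have hmul : a * (a⁻¹ + c⁻¹) * c = a * (b⁻¹ + d⁻¹) * c := by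
      rw [hd_inv]
      have l1 : a * (a⁻¹ + c⁻¹) * c = (a * a⁻¹) * c + a * (c⁻¹ * c) := by
        noncomm_ring
      have l2 : a * (b⁻¹ + -(a⁻¹ * b * c⁻¹)) * c
          = a * b⁻¹ * c - (a * a⁻¹) * b * (c⁻¹ * c) := by
        noncomm_ring
      rw [l1, l2, mul_inv_cancel₀ ha0, inv_mul_cancel₀ hc0, h2]
      simp only [one_mul, mul_one]
      abel
    exact mul_left_cancel₀ ha0 (mul_right_cancel₀ hc0 hmul)
  refine ⟨?_, key⟩
  rw [pure_smul_inv_aux a ha, pure_smul_inv_aux b hb, pure_smul_inv_aux c hc,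
    pure_smul_inv_aux d hd,
    show (-a⁻¹ - -b⁻¹ + -c⁻¹ - -d⁻¹ : Quaternion ℝ)
      = -((a⁻¹ + c⁻¹) - (b⁻¹ + d⁻¹)) from by abel, key]
  simp
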